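/- (Appendix, equation (12d).) For all subcarriers p, q ∈ {0,…,N−1} with p ≠ q, E[ conj(h̄(p)) · H̄^{ISI}_{pq} ] = (ρ̄(q−p) − 1) / ( N·(1 − e^{2πi(q−p)/N}) ), where ρ̄(η) = Σ_{ℓ=0}^{L−1} ρ(ℓ)·e^{−2πiℓη/N} for integers η. -/

import Mathlib

open Finset MeasureTheory

/-- Frequency-domain channel coefficient `h̄(p) = ∑_{ℓ=0}^{L-1} h(ℓ)·e^{-2πiℓp/N}`. -/
noncomputable def hBar {Ω : Type*} (N L : ℕ) (h : ℕ → Ω → ℂ) (p : ℕ) (ω : Ω) : ℂ :=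
  ∑ ℓ ∈ range L, h ℓ ω *
    Complex.exp (-(2 * (Real.pi : ℂ) * Complex.I * (ℓ : ℂ) * (p : ℂ)) / (N : ℂ))

/-- Frequency-domain ISI matrix entry
`H̄^{ISI}_{pq} = (1/N)·∑_{n=0}^{N-1} ∑_{ℓ=0}^{L-1} h(ℓ)·e^{2πi(nq-ℓq-np)/N}·𝟙[n < ℓ]`. -/
noncomputable def Hisi {Ω : Type*} (N L : ℕ) (h : ℕ → Ω → ℂ) (p q : ℕ) (ω : Ω) : ℂ :=
  (1 / (N : ℂ)) * ∑ n ∈ range N, ∑ ℓ ∈ range L,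
    h ℓ ω * Complex.exp (2 * (Real.pi : ℂ) * Complex.I *
      ((((n * q : ℕ) : ℤ) - ((ℓ * q : ℕ) : ℤ) - ((n * p : ℕ) : ℤ) : ℤ) : ℂ) / (N : ℂ)) *
    (if n < ℓ then 1 else 0)

/-- DFT of the power delay profile: `ρ̄(η) = ∑_{ℓ=0}^{L-1} ρ(ℓ)·e^{-2πiℓη/N}`. -/
noncomputable def rhoBar (N L : ℕ) (ρ : ℕ → ℝ) (η : ℤ) : ℂ :=
  ∑ ℓ ∈ range L, (ρ ℓ : ℂ) *
    Complex.exp (-(2 * (Real.pi : ℂ) * Complex.I * (ℓ : ℂ) * (η : ℂ)) / (N : ℂ))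

/-- Auxiliary coefficient for the expansion of `conj (hBar) * Hisi`. -/
noncomputable def coefC (N p q ℓ' n ℓ : ℕ) : ℂ :=
  1/(N:ℂ) * Complex.exp (2 * (Real.pi:ℂ) * Complex.I * (ℓ':ℂ) * (p:ℂ) / (N:ℂ)) *
    Complex.exp (2 * (Real.pi:ℂ) * Complex.I *
      ((((n * q : ℕ) : ℤ) - ((ℓ * q : ℕ) : ℤ) - ((n * p : ℕ) : ℤ) : ℤ) : ℂ) / (N:ℂ)) *
    (if n < ℓ then (1:ℂ) else 0)

/-- Appendix, equation (12d): for `p ≠ q`,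
`E[conj(h̄(p)) · H̄^{ISI}_{pq}] = (ρ̄(q-p) - 1) / (N·(1 - e^{2πi(q-p)/N}))`. -/
theorem stmt4 {Ω : Type*} [MeasurableSpace Ω] (μ : Measure Ω) [IsProbabilityMeasure μ]
    (N L : ℕ) (hL1 : 1 ≤ L) (hLN : L ≤ N)
    (ρ : ℕ → ℝ) (hnn : ∀ ℓ, 0 ≤ ρ ℓ) (hsum : ∑ ℓ ∈ range L, ρ ℓ = 1)
    (h : ℕ → Ω → ℂ)
    (hint : ∀ ℓ ℓ', ℓ < L → ℓ' < L →
      Integrable (fun ω => h ℓ ω * (starRingEnd ℂ) (h ℓ' ω)) μ)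
    (hmean : ∀ ℓ, ℓ < L → ∫ ω, h ℓ ω ∂μ = 0)
    (hcov : ∀ ℓ ℓ', ℓ < L → ℓ' < L →
      ∫ ω, h ℓ ω * (starRingEnd ℂ) (h ℓ' ω) ∂μ = if ℓ = ℓ' then ((ρ ℓ : ℝ) : ℂ) else 0)
    (p q : ℕ) (hp : p < N) (hq : q < N) (hpq : p ≠ q) :
    ∫ ω, (starRingEnd ℂ) (hBar N L h p ω) * Hisi N L h p q ω ∂μ
      = (rhoBar N L ρ ((q : ℤ) - (p : ℤ)) - 1) /
        ((N : ℂ) * (1 - Complex.exp (2 * (Real.pi : ℂ) * Complex.I *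
          (((q : ℤ) - (p : ℤ) : ℤ) : ℂ) / (N : ℂ)))) := by
  have hN0 : (N:ℂ) ≠ 0 := Nat.cast_ne_zero.2 (by omega)
  set Z : ℂ := Complex.exp (2 * (Real.pi : ℂ) * Complex.I *
      (((q : ℤ) - (p : ℤ) : ℤ) : ℂ) / (N : ℂ)) with hZ
  set U : ℂ := Complex.exp (2 * (Real.pi : ℂ) * Complex.I *
      (((p : ℤ) - (q : ℤ) : ℤ) : ℂ) / (N : ℂ)) with hU
  have hπ : (Real.pi : ℂ) ≠ 0 := Complex.ofReal_ne_zero.2 Real.pi_ne_zero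
  have h2πI : (2 * (Real.pi:ℂ) * Complex.I) ≠ 0 := by
    simp [hπ, Complex.I_ne_zero]
  have hZ1 : Z ≠ 1 := by
    rw [hZ]
    intro hcon
    rw [Complex.exp_eq_one_iff] at hcon
    obtain ⟨n, hn⟩ := hcon
    have hcc : ((q:ℂ) - p) = n * N := by
      apply mul_left_cancel₀ h2πI
      have hn' : 2 * (Real.pi:ℂ) * Complex.I * (((q:ℤ) - (p:ℤ) : ℤ) : ℂ) =
          n * (2 * (Real.pi:ℂ) * Complex.I) * N := by
        field_simp at hn
        push_cast at hn ⊢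
        linear_combination (2 * (Real.pi:ℂ) * Complex.I) * hn
      push_cast at hn' ⊢
      linear_combination hn'
    have hzz : (q:ℤ) - p = n * N := by exact_mod_cast hcc
    have hNz : (0:ℤ) < N := by exact_mod_cast (by omega : 0 < N)
    rcases lt_trichotomy n 0 with hn0 | hn0 | hn0
    · nlinarith [hzz, hNz, (by exact_mod_cast hq : (q:ℤ) < N), (by positivity : (0:ℤ) ≤ (p:ℤ))]
    · subst hn0; simp at hzz; omega
    · nlinarith [hzz, hNz, (by exact_mod_cast hp : (p:ℤ) < N), (by positivity : (0:ℤ) ≤ (q:ℤ))]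
  have hZne : Z - 1 ≠ 0 := sub_ne_zero.2 hZ1
  have hZne' : 1 - Z ≠ 0 := sub_ne_zero.2 (Ne.symm hZ1)
  have hUZ : U * Z = 1 := by
    rw [hU, hZ, ← Complex.exp_add, show 2 * (Real.pi:ℂ) * Complex.I *
      (((p:ℤ) - (q:ℤ) : ℤ) : ℂ) / (N:ℂ) + 2 * (Real.pi:ℂ) * Complex.I *
      (((q:ℤ) - (p:ℤ) : ℤ) : ℂ) / (N:ℂ) = 0 by push_cast; field_simp; ring,
      Complex.exp_zero]
  -- conjugation of the exponential
  have hconj : ∀ ℓ' : ℕ, (starRingEnd ℂ)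
      (Complex.exp (-(2 * (Real.pi : ℂ) * Complex.I * (ℓ' : ℂ) * (p : ℂ)) / (N : ℂ)))
      = Complex.exp (2 * (Real.pi:ℂ) * Complex.I * (ℓ':ℂ) * (p:ℂ) / (N:ℂ)) := by
    intro ℓ'
    rw [← Complex.exp_conj]
    congr 1
    simp only [map_div₀, map_neg, map_mul, Complex.conj_I, Complex.conj_ofReal,
      map_ofNat, Complex.conj_natCast]
    ring
  -- pointwise expansion
  have hpt : ∀ ω, (starRingEnd ℂ) (hBar N L h p ω) * Hisi N L h p q ω
      = ∑ n ∈ range N, ∑ ℓ ∈ range L, ∑ ℓ' ∈ range L,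
          coefC N p q ℓ' n ℓ * (h ℓ ω * (starRingEnd ℂ) (h ℓ' ω)) := by
    intro ω
    simp only [hBar, Hisi, map_sum, map_mul, Finset.sum_mul, Finset.mul_sum]
    refine Finset.sum_congr rfl fun n _ => Finset.sum_congr rfl fun ℓ _ =>
      Finset.sum_congr rfl fun ℓ' _ => ?_
    rw [hconj ℓ']
    simp only [coefC]
    ring
  have hInt : ∀ (c : ℂ) (ℓ ℓ' : ℕ), ℓ ∈ range L → ℓ' ∈ range L →
      Integrable (fun ω => c * (h ℓ ω * (starRingEnd ℂ) (h ℓ' ω))) μ :=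
    fun c ℓ ℓ' hℓ hℓ' => (hint ℓ ℓ' (mem_range.1 hℓ) (mem_range.1 hℓ')).const_mul c
  have step : ∫ ω, (starRingEnd ℂ) (hBar N L h p ω) * Hisi N L h p q ω ∂μ
      = ∑ n ∈ range N, ∑ ℓ ∈ range L, ∑ ℓ' ∈ range L,
          coefC N p q ℓ' n ℓ * (if ℓ = ℓ' then ((ρ ℓ : ℝ) : ℂ) else 0) := by
    simp_rw [hpt]
    rw [integral_finset_sum _ (fun n _ => integrable_finset_sum _ fun ℓ hℓ =>
      integrable_finset_sum _ fun ℓ' hℓ' => hInt _ _ _ hℓ hℓ')]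
    refine Finset.sum_congr rfl fun n _ => ?_
    rw [integral_finset_sum _ (fun ℓ hℓ => integrable_finset_sum _ fun ℓ' hℓ' =>
      hInt _ _ _ hℓ hℓ')]
    refine Finset.sum_congr rfl fun ℓ hℓ => ?_
    rw [integral_finset_sum _ (fun ℓ' hℓ' => hInt _ _ _ hℓ hℓ')]
    refine Finset.sum_congr rfl fun ℓ' hℓ' => ?_
    rw [integral_const_mul, hcov ℓ ℓ' (mem_range.1 hℓ) (mem_range.1 hℓ')]
  rw [step]
  -- collapse the ℓ' sum
  have step2 : ∀ n ∈ range N, ∀ ℓ ∈ range L,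
      (∑ ℓ' ∈ range L, coefC N p q ℓ' n ℓ * (if ℓ = ℓ' then ((ρ ℓ : ℝ) : ℂ) else 0))
        = coefC N p q ℓ n ℓ * (ρ ℓ : ℂ) := by
    intro n _ ℓ hℓ
    simp only [mul_ite, mul_zero]
    rw [Finset.sum_ite_eq (range L) ℓ (fun ℓ' => coefC N p q ℓ' n ℓ * (ρ ℓ : ℂ)),
      if_pos hℓ]
  rw [Finset.sum_congr rfl fun n hn => Finset.sum_congr rfl fun ℓ hℓ => step2 n hn ℓ hℓ,
    Finset.sum_comm]
  -- per-ℓ geometric sum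
  have claim : ∀ ℓ ∈ range L,
      ∑ n ∈ range N, coefC N p q ℓ n ℓ * (ρ ℓ : ℂ)
        = ((ρ ℓ : ℂ) * U ^ ℓ - (ρ ℓ : ℂ)) / ((N:ℂ) * (1 - Z)) := by
    intro ℓ hℓ
    have hℓN : ℓ ≤ N := le_trans (le_of_lt (mem_range.1 hℓ)) hLN
    have e1 : ∀ n : ℕ, coefC N p q ℓ n ℓ * (ρ ℓ : ℂ)
        = if n < ℓ then ((ρ ℓ : ℂ)/(N:ℂ)) * (U ^ ℓ * Z ^ n) else 0 := by
      intro n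
      simp only [coefC]
      by_cases hn : n < ℓ
      · rw [if_pos hn, if_pos hn]
        have key : U ^ ℓ * Z ^ n
            = Complex.exp (2 * (Real.pi:ℂ) * Complex.I * (ℓ:ℂ) * (p:ℂ) / (N:ℂ)) *
              Complex.exp (2 * (Real.pi:ℂ) * Complex.I *
                ((((n * q : ℕ) : ℤ) - ((ℓ * q : ℕ) : ℤ) - ((n * p : ℕ) : ℤ) : ℤ) : ℂ) / (N:ℂ)) := by
          rw [hU, hZ, ← Complex.exp_nat_mul, ← Complex.exp_nat_mul, ← Complex.exp_add,
            ← Complex.exp_add]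
          congr 1
          push_cast
          field_simp
          ring
        rw [key]
        ring
      · rw [if_neg hn, if_neg hn, mul_zero, zero_mul]
    rw [Finset.sum_congr rfl fun n _ => e1 n]
    have e2 : ∑ n ∈ range N, (if n < ℓ then ((ρ ℓ : ℂ)/(N:ℂ)) * (U ^ ℓ * Z ^ n) else 0)
        = ∑ n ∈ range ℓ, ((ρ ℓ : ℂ)/(N:ℂ)) * (U ^ ℓ * Z ^ n) := by
      rw [← Finset.sum_subset (Finset.range_subset_range.2 hℓN)
        (fun x _ hx => if_neg (by simpa using hx))]
      exact Finset.sum_congr rfl fun x hx => if_pos (mem_range.1 hx)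
    rw [e2, ← Finset.mul_sum, ← Finset.mul_sum, geom_sum_eq hZ1]
    have hUZℓ : U ^ ℓ * Z ^ ℓ = 1 := by rw [← mul_pow, hUZ, one_pow]
    field_simp
    linear_combination (ρ ℓ : ℂ) * (1 - Z) * hUZℓ
  rw [Finset.sum_congr rfl claim, ← Finset.sum_div]
  congr 1
  rw [Finset.sum_sub_distrib]
  congr 1
  · simp only [rhoBar]
    refine Finset.sum_congr rfl fun ℓ _ => ?_
    congr 1
    rw [hU, ← Complex.exp_nat_mul]
    congr 1
    push_cast
    field_simp
    ring
  · rw [← Complex.ofReal_sum, hsum, Complex.ofReal_one]
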